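/- Let (M_i, X_i, Y_i), i = 1, 2, …, be i.i.d. copies of (M, X, Y), where M ∈ {0,1}, M and Y are conditionally independent given X, and the propensity score π(X) = P(M = 1 | X) satisfies π(X) ≥ 2c > 0 almost surely. Fix a measurable f : 𝒳 → ℝ such that 0 ≤ L(y, f(x)) ≤ B for all (x, y). Let π̂_n : 𝒳 → [c', 1] (c' > 0) be a sequence of (possibly data-dependent) measurable random functions with sup_{x ∈ 𝒳} |π̂_n(x) − π(x)| → 0 in probability. Then the weighted empirical risk (1/n) Σ_{i=1}^n M_i L(Y_i, f(X_i)) / π̂_n(X_i) converges in probability to the risk R_{L,P}(f) = E[L(Y, f(X))]. -/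

import Mathlib

open MeasureTheory ProbabilityTheory Filter
open scoped NNReal ENNReal

private lemma stmt1_bdd_integrable {Ω : Type*} [MeasurableSpace Ω] (μ : Measure Ω)
    [IsFiniteMeasure μ]
    {g : Ω → ℝ} (hg : AEStronglyMeasurable g μ) (C : ℝ) (h : ∀ ω, |g ω| ≤ C) :
    Integrable g μ :=
  (integrable_const C).mono' hg (Filter.Eventually.of_forall fun ω => by
    simpa [Real.norm_eq_abs] using h ω)

private lemma stmt1_rect {Ω 𝒳 : Type*} [mΩ : MeasurableSpace Ω] [StandardBorelSpace Ω]
    [MeasurableSpace 𝒳]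
    (μ : Measure Ω) [IsProbabilityMeasure μ]
    (M0 : Ω → ℝ) (X0 : Ω → 𝒳) (Y0 : Ω → ℝ)
    (hM : Measurable M0) (hX : Measurable X0) (hY : Measurable Y0)
    (hM01 : ∀ ω, M0 ω = 0 ∨ M0 ω = 1)
    (hMAR : CondIndepFun (MeasurableSpace.comap X0 inferInstance) hX.comap_le M0 Y0 μ)
    (π : 𝒳 → ℝ) (hπ : Measurable π)
    (hπX : (fun ω => π (X0 ω)) =ᵐ[μ] μ[M0 | MeasurableSpace.comap X0 inferInstance])
    (hπ01 : ∀ x, π x ∈ Set.Icc (0:ℝ) 1)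
    {S : Set 𝒳} {T : Set ℝ} (hS : MeasurableSet S) (hT : MeasurableSet T) :
    μ ((M0 ⁻¹' {1}) ∩ (X0 ⁻¹' S ∩ Y0 ⁻¹' T))
      = ∫⁻ ω in X0 ⁻¹' S ∩ Y0 ⁻¹' T, ENNReal.ofReal (π (X0 ω)) ∂μ := by
  have hm'le : MeasurableSpace.comap X0 inferInstance ≤ mΩ := hX.comap_le
  set A := M0 ⁻¹' {1} with hAdef
  set U := X0 ⁻¹' S with hUdef
  set V := Y0 ⁻¹' T with hVdef
  have hAm : MeasurableSet[mΩ] A := hM (measurableSet_singleton 1)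
  have hUm : MeasurableSet[mΩ] U := hX hS
  have hVm : MeasurableSet[mΩ] V := hY hT
  have hUm' : MeasurableSet[MeasurableSpace.comap X0 inferInstance] U := ⟨S, hS, rfl⟩
  have hXm' : Measurable[MeasurableSpace.comap X0 inferInstance] X0 := fun s hs => ⟨s, hs, rfl⟩
  have hπXm' : Measurable[MeasurableSpace.comap X0 inferInstance] fun ω => π (X0 ω) :=
    hπ.comp hXm'
  have hπXmeas : Measurable[mΩ] fun ω => π (X0 ω) := hπ.comp hX
  have hAind : Set.indicator A (fun _ => (1:ℝ)) = M0 := by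
    funext ω
    rcases hM01 ω with h | h <;> simp [Set.indicator_apply, hAdef, Set.mem_preimage, h]
  -- conditional independence applied to sets
  have hCI := (condIndepFun_iff_condExp_inter_preimage_eq_mul
      (hm' := hm'le) (μ := μ) hM hY).mp hMAR {1} T (measurableSet_singleton 1) hT
  have hπA : (μ⟦A | MeasurableSpace.comap X0 inferInstance⟧) =ᵐ[μ] fun ω => π (X0 ω) := by
    have h1 : (μ⟦A | MeasurableSpace.comap X0 inferInstance⟧)
        = μ[M0 | MeasurableSpace.comap X0 inferInstance] := by rw [← hAind]
    rw [h1]; exact hπX.symm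
  set Q : Ω → ℝ :=
    fun ω => π (X0 ω) * (μ⟦V | MeasurableSpace.comap X0 inferInstance⟧) ω with hQdef
  have hCI' : (μ⟦A ∩ V | MeasurableSpace.comap X0 inferInstance⟧) =ᵐ[μ] Q := by
    refine hCI.trans ?_
    filter_upwards [hπA] with ω hω
    rw [hQdef]
    dsimp only
    rw [hω]
  have hint1 : Integrable (Set.indicator (A ∩ V) (fun _ => (1:ℝ))) μ :=
    (integrable_const 1).indicator (hAm.inter hVm)
  have hintV : Integrable (Set.indicator V (fun _ => (1:ℝ))) μ :=
    (integrable_const 1).indicator hVm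
  have ind_one : ∀ (W : Set Ω), MeasurableSet[mΩ] W →
      ∫ ω, Set.indicator W (fun _ => (1:ℝ)) ω ∂μ = (μ W).toReal := by
    intro W hW
    rw [integral_indicator hW, setIntegral_const, smul_eq_mul, mul_one, measureReal_def]
  have key1 : (μ (A ∩ (U ∩ V))).toReal = ∫ ω, Set.indicator U Q ω ∂μ := by
    have e0 : U ∩ (A ∩ V) = A ∩ (U ∩ V) := (Set.inter_left_comm A U V).symm
    calc (μ (A ∩ (U ∩ V))).toReal
        = ∫ ω, Set.indicator U (Set.indicator (A ∩ V) (fun _ => (1:ℝ))) ω ∂μ := by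
          rw [Set.indicator_indicator, ind_one _ (hUm.inter (hAm.inter hVm)), e0]
      _ = ∫ ω, (μ[Set.indicator U (Set.indicator (A ∩ V) (fun _ => (1:ℝ)))
            | MeasurableSpace.comap X0 inferInstance]) ω ∂μ := (integral_condExp hm'le).symm
      _ = ∫ ω, Set.indicator U Q ω ∂μ := by
          refine integral_congr_ae ?_
          refine (condExp_indicator hint1 hUm').trans ?_
          filter_upwards [hCI'] with ω hω
          by_cases hU : ω ∈ U <;>
            simp [Set.indicator_of_mem, Set.indicator_of_notMem, hU, hω]
  have key2 : ∫⁻ ω in U ∩ V, ENNReal.ofReal (π (X0 ω)) ∂μ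
      = ENNReal.ofReal (∫ ω, Set.indicator U Q ω ∂μ) := by
    have hπint : Integrable (fun ω => π (X0 ω)) (μ.restrict (U ∩ V)) :=
      stmt1_bdd_integrable _ hπXmeas.aestronglyMeasurable 1 (fun ω => abs_le.2
        ⟨by linarith [(hπ01 (X0 ω)).1], (hπ01 (X0 ω)).2⟩)
    have hπnn : 0 ≤ᵐ[μ.restrict (U ∩ V)] fun ω => π (X0 ω) :=
      Filter.Eventually.of_forall fun ω => (hπ01 (X0 ω)).1
    set F : Ω → ℝ := Set.indicator U (fun ω => π (X0 ω)) with hFdef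
    have hFsm : StronglyMeasurable[MeasurableSpace.comap X0 inferInstance] F :=
      (hπXm'.indicator hUm').stronglyMeasurable
    have hFm : Measurable[mΩ] F := hπXmeas.indicator hUm
    have hGm : Measurable[mΩ] (Set.indicator V (fun _ => (1:ℝ))) :=
      (measurable_const).indicator hVm
    have hFG_int : Integrable (F * Set.indicator V (fun _ => (1:ℝ))) μ := by
      refine stmt1_bdd_integrable _ (hFm.mul hGm).aestronglyMeasurable 1 (fun ω => ?_)
      have h1 : |F ω| ≤ 1 := by
        rw [hFdef]
        by_cases hU : ω ∈ U
        · rw [Set.indicator_of_mem hU]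
          exact abs_le.2 ⟨by linarith [(hπ01 (X0 ω)).1], (hπ01 (X0 ω)).2⟩
        · rw [Set.indicator_of_notMem hU]; simp
      have h2 : |Set.indicator V (fun _ => (1:ℝ)) ω| ≤ 1 := by
        by_cases hV : ω ∈ V <;>
          simp [Set.indicator_of_mem, Set.indicator_of_notMem, hV]
      calc |(F * Set.indicator V (fun _ => (1:ℝ))) ω|
          = |F ω| * |Set.indicator V (fun _ => (1:ℝ)) ω| := abs_mul _ _
        _ ≤ 1 * 1 := mul_le_mul h1 h2 (abs_nonneg _) zero_le_one
        _ = 1 := one_mul 1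
    have hpull := condExp_mul_of_stronglyMeasurable_left hFsm hFG_int hintV
    calc ∫⁻ ω in U ∩ V, ENNReal.ofReal (π (X0 ω)) ∂μ
        = ENNReal.ofReal (∫ ω in U ∩ V, π (X0 ω) ∂μ) :=
          (ofReal_integral_eq_lintegral_ofReal hπint hπnn).symm
      _ = ENNReal.ofReal (∫ ω, Set.indicator U Q ω ∂μ) := by
          congr 1
          calc ∫ ω in U ∩ V, π (X0 ω) ∂μ
              = ∫ ω, Set.indicator (U ∩ V) (fun ω => π (X0 ω)) ω ∂μ :=
                (integral_indicator (hUm.inter hVm)).symm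
            _ = ∫ ω, (F * Set.indicator V (fun _ => (1:ℝ))) ω ∂μ := by
                refine integral_congr_ae (Filter.Eventually.of_forall fun ω => ?_)
                by_cases h1 : ω ∈ U <;> by_cases h2 : ω ∈ V <;>
                  simp [hFdef, Set.indicator_of_mem, Set.indicator_of_notMem, h1, h2,
                    Set.mem_inter_iff]
            _ = ∫ ω, (μ[F * Set.indicator V (fun _ => (1:ℝ))
                  | MeasurableSpace.comap X0 inferInstance]) ω ∂μ :=
                (integral_condExp hm'le).symm
            _ = ∫ ω, Set.indicator U Q ω ∂μ := by
                refine integral_congr_ae (hpull.trans ?_)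
                refine Filter.Eventually.of_forall fun ω => ?_
                by_cases hU : ω ∈ U <;>
                  simp [hQdef, hFdef, Set.indicator_of_mem, Set.indicator_of_notMem, hU,
                    mul_assoc]
  rw [key2, ← key1, ENNReal.ofReal_toReal (measure_ne_top μ _)]

private lemma stmt1_exp {Ω 𝒳 : Type*} [mΩ : MeasurableSpace Ω] [MeasurableSpace 𝒳]
    (μ : Measure Ω) [IsProbabilityMeasure μ]
    (M0 : Ω → ℝ) (X0 : Ω → 𝒳) (Y0 : Ω → ℝ)
    (hM : Measurable M0) (hX : Measurable X0) (hY : Measurable Y0)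
    (hM01 : ∀ ω, M0 ω = 0 ∨ M0 ω = 1)
    (π : 𝒳 → ℝ) (hπ : Measurable π)
    (hπ01 : ∀ x, π x ∈ Set.Icc (0:ℝ) 1)
    (hrect : ∀ {S : Set 𝒳} {T : Set ℝ}, MeasurableSet S → MeasurableSet T →
      μ ((M0 ⁻¹' {1}) ∩ (X0 ⁻¹' S ∩ Y0 ⁻¹' T))
        = ∫⁻ ω in X0 ⁻¹' S ∩ Y0 ⁻¹' T, ENNReal.ofReal (π (X0 ω)) ∂μ)
    (g : 𝒳 × ℝ → ℝ) (hg : Measurable g) :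
    ∫ ω, M0 ω * g (X0 ω, Y0 ω) ∂μ = ∫ ω, π (X0 ω) * g (X0 ω, Y0 ω) ∂μ := by
  set A := M0 ⁻¹' {1} with hAdef
  have hAm : MeasurableSet[mΩ] A := hM (measurableSet_singleton 1)
  set Z : Ω → 𝒳 × ℝ := fun ω => (X0 ω, Y0 ω) with hZdef
  have hZ : Measurable Z := hX.prodMk hY
  set ν₁ : Measure (𝒳 × ℝ) := Measure.map Z (μ.restrict A) with hν₁
  set ν₂ : Measure (𝒳 × ℝ) :=
    (Measure.map Z μ).withDensity (fun p => ENNReal.ofReal (π p.1)) with hν₂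
  have hρm : Measurable fun p : 𝒳 × ℝ => ENNReal.ofReal (π p.1) :=
    (ENNReal.measurable_ofReal.comp hπ).comp measurable_fst
  have hrect' : ∀ {S : Set 𝒳} {T : Set ℝ}, MeasurableSet S → MeasurableSet T →
      ν₁ (S ×ˢ T) = ν₂ (S ×ˢ T) := by
    intro S T hS hT
    have hST : MeasurableSet (S ×ˢ T) := hS.prod hT
    have hpre : Z ⁻¹' (S ×ˢ T) = X0 ⁻¹' S ∩ Y0 ⁻¹' T := Set.mk_preimage_prod _ _
    rw [hν₁, hν₂, Measure.map_apply hZ hST, Measure.restrict_apply (hZ hST),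
      withDensity_apply _ hST, setLIntegral_map hST hρm hZ, hpre, Set.inter_comm]
    exact hrect hS hT
  have hfin1 : IsFiniteMeasure ν₁ := by
    constructor
    rw [hν₁, Measure.map_apply hZ MeasurableSet.univ]
    exact lt_of_le_of_lt (measure_mono (Set.subset_univ _))
      (measure_lt_top (μ.restrict A) Set.univ)
  have hfin2 : IsFiniteMeasure ν₂ := by
    constructor
    rw [hν₂, withDensity_apply _ MeasurableSet.univ, Measure.restrict_univ]
    calc ∫⁻ p, ENNReal.ofReal (π p.1) ∂(Measure.map Z μ)
        ≤ ∫⁻ _, 1 ∂(Measure.map Z μ) := by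
          refine lintegral_mono fun p => ?_
          exact ENNReal.ofReal_le_one.mpr (hπ01 p.1).2
      _ < ⊤ := by
          rw [lintegral_one]
          exact measure_lt_top _ _
  have hνeq : ν₁ = ν₂ := by
    refine ext_of_generate_finite
      (Set.image2 (· ×ˢ ·) {s : Set 𝒳 | MeasurableSet s} {t : Set ℝ | MeasurableSet t})
      generateFrom_prod.symm isPiSystem_prod ?_ ?_
    · rintro _ ⟨S, hS, T, hT, rfl⟩
      exact hrect' hS hT
    · rw [← Set.univ_prod_univ]
      exact hrect' MeasurableSet.univ MeasurableSet.univ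
  have hMg : ∀ ω, M0 ω * g (Z ω) = Set.indicator A (fun ω => g (Z ω)) ω := by
    intro ω
    by_cases hA : ω ∈ A
    · have h1 : M0 ω = 1 := hA
      rw [Set.indicator_of_mem hA, h1, one_mul]
    · have h0 : M0 ω = 0 := (hM01 ω).resolve_right hA
      rw [Set.indicator_of_notMem hA, h0, zero_mul]
  calc ∫ ω, M0 ω * g (X0 ω, Y0 ω) ∂μ
      = ∫ ω, Set.indicator A (fun ω => g (Z ω)) ω ∂μ := integral_congr_ae
        (Filter.Eventually.of_forall hMg)
    _ = ∫ ω, g (Z ω) ∂(μ.restrict A) := integral_indicator hAm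
    _ = ∫ p, g p ∂ν₁ := (integral_map hZ.aemeasurable hg.aestronglyMeasurable).symm
    _ = ∫ p, g p ∂ν₂ := by rw [hνeq]
    _ = ∫ p, (π p.1).toNNReal • g p ∂(Measure.map Z μ) := by
        rw [hν₂]
        have : (fun p : 𝒳 × ℝ => ENNReal.ofReal (π p.1))
            = fun p : 𝒳 × ℝ => ((π p.1).toNNReal : ℝ≥0∞) := rfl
        rw [this]
        exact integral_withDensity_eq_integral_smul
          ((measurable_real_toNNReal.comp hπ).comp measurable_fst) g
    _ = ∫ p, π p.1 * g p ∂(Measure.map Z μ) := by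
        refine integral_congr_ae (Filter.Eventually.of_forall fun p => ?_)
        show (π p.1).toNNReal • g p = π p.1 * g p
        rw [NNReal.smul_def, smul_eq_mul, Real.coe_toNNReal _ (hπ01 p.1).1]
    _ = ∫ ω, π (X0 ω) * g (X0 ω, Y0 ω) ∂μ := by
        rw [integral_map hZ.aemeasurable]
        exact ((hπ.comp measurable_fst).mul hg).aestronglyMeasurable

/-- For i.i.d. copies `(Mᵢ, Xᵢ, Yᵢ)` of `(M, X, Y)` satisfying the MAR
assumption, with propensity score `π(X) = E[M | X]` satisfying `2c ≤ π ≤ 1`, a fixed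
measurable `f` with `0 ≤ L(y, f(x)) ≤ B`, and estimated propensities
`π̂ₙ : 𝒳 → [c', 1]` with `sup_x |π̂ₙ(x) − π(x)| → 0` in probability, the weighted
empirical risk `(1/n) Σᵢ Mᵢ L(Yᵢ, f(Xᵢ)) / π̂ₙ(Xᵢ)` converges in probability to the
risk `R_{L,P}(f) = E[L(Y, f(X))]`. -/
theorem stmt_1
    {Ω 𝒳 : Type*} [MeasurableSpace Ω] [StandardBorelSpace Ω] [MeasurableSpace 𝒳]
    (μ : Measure Ω) [IsProbabilityMeasure μ]
    (M : ℕ → Ω → ℝ) (X : ℕ → Ω → 𝒳) (Y : ℕ → Ω → ℝ)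
    (hM : ∀ i, Measurable (M i)) (hX : ∀ i, Measurable (X i)) (hY : ∀ i, Measurable (Y i))
    (hM01 : ∀ i ω, M i ω = 0 ∨ M i ω = 1)
    -- the triples (Mᵢ, Xᵢ, Yᵢ) are i.i.d. copies of the base triple (M₀, X₀, Y₀)
    (hIndep : iIndepFun (fun i ω => (M i ω, X i ω, Y i ω)) μ)
    (hIdent : ∀ i, IdentDistrib (fun ω => (M i ω, X i ω, Y i ω))
      (fun ω => (M 0 ω, X 0 ω, Y 0 ω)) μ μ)
    -- MAR: M and Y are conditionally independent given X
    (hMAR : CondIndepFun (MeasurableSpace.comap (X 0) inferInstance) (hX 0).comap_le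
      (M 0) (Y 0) μ)
    -- propensity score: π(X) = P(M = 1 | X) = E[M | X], with π(x) ≥ 2c > 0
    (π : 𝒳 → ℝ) (hπ : Measurable π)
    (hπX : (fun ω => π (X 0 ω)) =ᵐ[μ] μ[M 0 | MeasurableSpace.comap (X 0) inferInstance])
    (c : ℝ) (hc : 0 < c) (hπrange : ∀ x, π x ∈ Set.Icc (2 * c) 1)
    -- the loss and the fixed predictor, with 0 ≤ L(y, f(x)) ≤ B
    (L : ℝ → ℝ → ℝ) (hL : Measurable (Function.uncurry L))
    (f : 𝒳 → ℝ) (hf : Measurable f)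
    (B : ℝ) (hLf : ∀ (x : 𝒳) (y : ℝ), L y (f x) ∈ Set.Icc 0 B)
    -- the (possibly data-dependent) propensity estimators π̂ₙ : Ω → 𝒳 → [c', 1]
    (c' : ℝ) (hc' : 0 < c')
    (πhat : ℕ → Ω → 𝒳 → ℝ)
    (hπhatMeas : ∀ n, Measurable (fun p : Ω × 𝒳 => πhat n p.1 p.2))
    (hπhatRange : ∀ n ω x, πhat n ω x ∈ Set.Icc c' 1)
    -- uniform consistency of π̂ₙ, in probability
    (hπhatConv : TendstoInMeasure μ (fun n ω => ⨆ x : 𝒳, |πhat n ω x - π x|)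
      Filter.atTop (fun _ => (0 : ℝ))) :
    TendstoInMeasure μ
      (fun (n : ℕ) ω => (n : ℝ)⁻¹ * ∑ i ∈ Finset.range n,
        M i ω * L (Y i ω) (f (X i ω)) / πhat n ω (X i ω))
      Filter.atTop
      (fun _ => ∫ ω, L (Y 0 ω) (f (X 0 ω)) ∂μ) := by
  classical
  -- nonemptiness and basic bounds
  have hμ1 : μ Set.univ = 1 := measure_univ
  have hΩne : Nonempty Ω := by
    by_contra h
    rw [not_nonempty_iff] at h
    rw [Set.univ_eq_empty_iff.mpr h, measure_empty] at hμ1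
    exact zero_ne_one hμ1
  obtain ⟨ω₀⟩ := hΩne
  have hB0 : (0:ℝ) ≤ B := le_trans (hLf (X 0 ω₀) 0).1 (hLf (X 0 ω₀) 0).2
  have h2c : (0:ℝ) < 2 * c := by linarith
  have hπ01 : ∀ x, π x ∈ Set.Icc (0:ℝ) 1 := fun x =>
    ⟨by linarith [(hπrange x).1], (hπrange x).2⟩
  have hπpos : ∀ x, 0 < π x := fun x => lt_of_lt_of_le h2c (hπrange x).1
  -- the function g and the oracle-weighted variables W
  set g : 𝒳 × ℝ → ℝ := fun p => L p.2 (f p.1) / π p.1 with hgdef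
  have hLm : Measurable fun p : 𝒳 × ℝ => L p.2 (f p.1) :=
    hL.comp (measurable_snd.prodMk (hf.comp measurable_fst))
  have hgm : Measurable g := hLm.div (hπ.comp measurable_fst)
  set G : ℝ × 𝒳 × ℝ → ℝ := fun q => q.1 * L q.2.2 (f q.2.1) / π q.2.1 with hGdef
  have hGm : Measurable G := by
    refine Measurable.div ?_ (hπ.comp (measurable_fst.comp measurable_snd))
    exact measurable_fst.mul (hL.comp ((measurable_snd.comp measurable_snd).prodMk
      (hf.comp (measurable_fst.comp measurable_snd))))
  set W : ℕ → Ω → ℝ := fun i ω => G (M i ω, X i ω, Y i ω) with hWdef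
  have hWm : ∀ i, Measurable (W i) := fun i =>
    hGm.comp ((hM i).prodMk ((hX i).prodMk (hY i)))
  have hWbd : ∀ i ω, |W i ω| ≤ B / (2 * c) := by
    intro i ω
    rcases hM01 i ω with h | h
    · have : W i ω = 0 := by simp [hWdef, hGdef, h]
      rw [this, abs_zero]
      positivity
    · have hW : W i ω = L (Y i ω) (f (X i ω)) / π (X i ω) := by
        simp [hWdef, hGdef, h]
      rw [hW, abs_of_nonneg (div_nonneg (hLf _ _).1 (hπ01 _).1)]
      exact div_le_div₀ hB0 (hLf _ _).2 h2c (hπrange _).1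
  have hWint : Integrable (W 0) μ :=
    stmt1_bdd_integrable μ (hWm 0).aestronglyMeasurable _ (hWbd 0)
  -- expectation identity via MAR
  have hrect : ∀ {S : Set 𝒳} {T : Set ℝ}, MeasurableSet S → MeasurableSet T →
      μ ((M 0 ⁻¹' {1}) ∩ (X 0 ⁻¹' S ∩ Y 0 ⁻¹' T))
        = ∫⁻ ω in X 0 ⁻¹' S ∩ Y 0 ⁻¹' T, ENNReal.ofReal (π (X 0 ω)) ∂μ :=
    fun hS hT => stmt1_rect μ (M 0) (X 0) (Y 0) (hM 0) (hX 0) (hY 0) (hM01 0) hMAR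
      π hπ hπX hπ01 hS hT
  have hEW : ∫ ω, W 0 ω ∂μ = ∫ ω, L (Y 0 ω) (f (X 0 ω)) ∂μ := by
    have e1 : ∫ ω, W 0 ω ∂μ = ∫ ω, M 0 ω * g (X 0 ω, Y 0 ω) ∂μ := by
      refine integral_congr_ae (Filter.Eventually.of_forall fun ω => ?_)
      simp [hWdef, hGdef, hgdef, mul_div_assoc]
    rw [e1, stmt1_exp μ (M 0) (X 0) (Y 0) (hM 0) (hX 0) (hY 0) (hM01 0) π hπ hπ01
      hrect g hgm]
    refine integral_congr_ae (Filter.Eventually.of_forall fun ω => ?_)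
    rw [hgdef]
    dsimp only
    rw [mul_comm, div_mul_cancel₀ _ (ne_of_gt (hπpos (X 0 ω)))]
  -- strong law of large numbers for W
  have hWindep : Pairwise (Function.onFun (IndepFun · · μ) W) := by
    intro i j hij
    exact (hIndep.indepFun hij).comp hGm hGm
  have hWident : ∀ i, IdentDistrib (W i) (W 0) μ μ := fun i => (hIdent i).comp hGm
  have hae := strong_law_ae W hWint hWindep hWident
  set R : ℝ := ∫ ω, L (Y 0 ω) (f (X 0 ω)) ∂μ with hRdef
  set Bn : ℕ → Ω → ℝ := fun n ω => (n : ℝ)⁻¹ * ∑ i ∈ Finset.range n, W i ω with hBndef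
  have hBnm : ∀ n, AEStronglyMeasurable (Bn n) μ := fun n =>
    ((Finset.measurable_sum (Finset.range n) fun i _ => hWm i).const_mul
      ((n:ℝ)⁻¹)).aestronglyMeasurable
  have hBconv : TendstoInMeasure μ Bn atTop (fun _ => R) := by
    refine tendstoInMeasure_of_tendsto_ae hBnm ?_
    filter_upwards [hae] with ω hω
    have : (∫ ω, W 0 ω ∂μ) = R := by rw [hEW]
    rw [← this]
    simpa [smul_eq_mul, hBndef] using hω
  -- uniform bound on the substitution error
  set Sn : ℕ → Ω → ℝ := fun n ω => ⨆ x : 𝒳, |πhat n ω x - π x| with hSndef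
  have hbdd : ∀ n ω, BddAbove (Set.range fun x : 𝒳 => |πhat n ω x - π x|) := by
    intro n ω
    refine ⟨1, ?_⟩
    rintro _ ⟨x, rfl⟩
    have h1 := hπhatRange n ω x
    have h2 := hπrange x
    exact abs_le.2 ⟨by linarith [h1.1, h1.2, h2.1, h2.2, hc.le, hc'.le], by linarith [h1.1, h1.2, h2.1, h2.2, hc.le, hc'.le]⟩
  have hSle : ∀ n ω x, |πhat n ω x - π x| ≤ Sn n ω := fun n ω x => le_ciSup (hbdd n ω) x
  have hSnn : ∀ n ω, 0 ≤ Sn n ω := fun n ω =>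
    le_trans (abs_nonneg _) (hSle n ω (X 0 ω₀))
  set K : ℝ := (B + 1) / (c' * (2 * c)) with hKdef
  have hKpos : 0 < K := div_pos (by linarith) (by positivity)
  set An : ℕ → Ω → ℝ := fun n ω => (n : ℝ)⁻¹ * ∑ i ∈ Finset.range n,
    M i ω * L (Y i ω) (f (X i ω)) / πhat n ω (X i ω) with hAndef
  have hdiff : ∀ n ω, dist (An n ω) (Bn n ω) ≤ K * Sn n ω := by
    intro n ω
    have hterm : ∀ i, |M i ω * L (Y i ω) (f (X i ω)) / πhat n ω (X i ω) - W i ω|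
        ≤ K * Sn n ω := by
      intro i
      have hl0 : 0 ≤ M i ω * L (Y i ω) (f (X i ω)) := by
        rcases hM01 i ω with h | h <;> simp [h, (hLf _ _).1]
      have hlB : M i ω * L (Y i ω) (f (X i ω)) ≤ B := by
        rcases hM01 i ω with h | h <;> simp [h] <;> first | exact hB0 | exact (hLf _ _).2
      set l := M i ω * L (Y i ω) (f (X i ω)) with hldef
      set p1 := πhat n ω (X i ω) with hp1def
      set p2 := π (X i ω) with hp2def
      have hp1 : c' ≤ p1 := (hπhatRange n ω (X i ω)).1
      have hp2 : 2 * c ≤ p2 := (hπrange (X i ω)).1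
      have hp1pos : 0 < p1 := lt_of_lt_of_le hc' hp1
      have hp2pos : 0 < p2 := lt_of_lt_of_le h2c hp2
      have hWi : W i ω = l / p2 := by rw [hWdef, hGdef]
      rw [hWi]
      have e : l / p1 - l / p2 = l * (p2 - p1) / (p1 * p2) := by
        field_simp
      rw [e, abs_div, abs_of_pos (mul_pos hp1pos hp2pos)]
      have hnum : |l * (p2 - p1)| ≤ (B + 1) * Sn n ω := by
        rw [abs_mul, abs_of_nonneg hl0]
        refine mul_le_mul (by linarith) ?_ (abs_nonneg _) (by linarith)
        rw [abs_sub_comm]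
        exact hSle n ω (X i ω)
      have hden : c' * (2 * c) ≤ p1 * p2 :=
        mul_le_mul hp1 hp2 h2c.le (by linarith)
      calc |l * (p2 - p1)| / (p1 * p2) ≤ ((B + 1) * Sn n ω) / (c' * (2 * c)) :=
            div_le_div₀ (mul_nonneg (by linarith) (hSnn n ω)) hnum (by positivity) hden
        _ = K * Sn n ω := by rw [hKdef, div_mul_eq_mul_div]
    have hsum : An n ω - Bn n ω = (n : ℝ)⁻¹ * ∑ i ∈ Finset.range n,
        (M i ω * L (Y i ω) (f (X i ω)) / πhat n ω (X i ω) - W i ω) := by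
      rw [hAndef, hBndef]
      dsimp only
      rw [← mul_sub, ← Finset.sum_sub_distrib]
    rw [Real.dist_eq, hsum, abs_mul, abs_inv, Nat.abs_cast]
    calc ((n:ℝ))⁻¹ * |∑ i ∈ Finset.range n,
          (M i ω * L (Y i ω) (f (X i ω)) / πhat n ω (X i ω) - W i ω)|
        ≤ (n:ℝ)⁻¹ * ∑ i ∈ Finset.range n,
          |M i ω * L (Y i ω) (f (X i ω)) / πhat n ω (X i ω) - W i ω| := by
          refine mul_le_mul_of_nonneg_left (Finset.abs_sum_le_sum_abs _ _) (by positivity)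
      _ ≤ (n:ℝ)⁻¹ * ∑ _i ∈ Finset.range n, K * Sn n ω := by
          refine mul_le_mul_of_nonneg_left (Finset.sum_le_sum fun i _ => hterm i)
            (by positivity)
      _ = (n:ℝ)⁻¹ * ((n:ℝ) * (K * Sn n ω)) := by
          rw [Finset.sum_const, Finset.card_range, nsmul_eq_mul]
      _ ≤ K * Sn n ω := by
          rcases Nat.eq_zero_or_pos n with h | h
          · simp [h]
            exact mul_nonneg hKpos.le (hSnn _ ω)
          · rw [← mul_assoc, inv_mul_cancel₀ (Nat.cast_ne_zero.mpr h.ne'), one_mul]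
  -- final ε-argument
  rw [tendstoInMeasure_iff_dist] at hBconv hπhatConv ⊢
  intro ε hε
  have h1 := hBconv (ε / 2) (by positivity)
  have h2 := hπhatConv (ε / (2 * K)) (by positivity)
  have hsub : ∀ n, {ω | ε ≤ dist (An n ω) R}
      ⊆ {ω | ε / (2 * K) ≤ dist (Sn n ω) 0} ∪ {ω | ε / 2 ≤ dist (Bn n ω) R} := by
    intro n ω hω
    simp only [Set.mem_setOf_eq] at hω
    by_cases h : ε / 2 ≤ dist (Bn n ω) R
    · exact Or.inr h
    · push_neg at h
      left
      have htri := dist_triangle (An n ω) (Bn n ω) R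
      have hAB : ε / 2 ≤ dist (An n ω) (Bn n ω) := by linarith
      have hKS : ε / 2 ≤ K * Sn n ω := le_trans hAB (hdiff n ω)
      show ε / (2 * K) ≤ dist (Sn n ω) 0
      rw [Real.dist_eq, sub_zero, abs_of_nonneg (hSnn n ω)]
      rw [← div_div, div_le_iff₀ hKpos]
      rw [mul_comm]
      exact hKS
  refine tendsto_of_tendsto_of_tendsto_of_le_of_le
    (h := fun n => μ {ω | ε / (2 * K) ≤ dist (Sn n ω) 0} + μ {ω | ε / 2 ≤ dist (Bn n ω) R})
    tendsto_const_nhds ?_ (fun n => zero_le) ?_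
  · have := h2.add h1
    simpa using this
  · intro n
    exact le_trans (measure_mono (hsub n)) (measure_union_le _ _)
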